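/- Consider the single-item all-pay auction with parameters (B_1, B_2, v_1, v_2) with B_1 ≠ B_2; let s be the player with the larger budget, w the other player, and L = min{B_1, B_2, v_1, v_2}. If v_s > L, then the following profile of mixed strategies is a Nash equilibrium: player s's strategy is the probability measure on [0, L] whose cumulative distribution function is F_s(x) = x/v_w for x ∈ [0, L) with an atom of mass 1 − L/v_w at L; player w's strategy is the probability measure on [0, L] with an atom of mass (v_s − L)/v_s at 0 and cumulative distribution function F_w(x) = (v_s − L + x)/v_s for x ∈ (0, L]. -/

import Mathlib

open MeasureTheory Set

noncomputable section

/-- `L = min {B₁, B₂, v₁, v₂}` for the single-item auction. -/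
def Lval (B v : Fin 2 → ℝ) : ℝ := min (min (B 0) (B 1)) (min (v 0) (v 1))

/-- Probability that player `i` wins the single item when bidding `xi` while the
opponent bids `xo`: the strictly higher bid wins; on a tie at
`min {B₁, B₂, v₁, v₂}` the player with the strictly larger `min {Bᵢ, vᵢ}` wins,
and all other ties are resolved by a fair coin. -/
def winProb (B v : Fin 2 → ℝ) (i : Fin 2) (xi xo : ℝ) : ℝ :=
  if xo < xi then 1
  else if xi < xo then 0
  else if xi = Lval B v ∧ min (B (1 - i)) (v (1 - i)) < min (B i) (v i) then 1
  else if xi = Lval B v ∧ min (B i) (v i) < min (B (1 - i)) (v (1 - i)) then 0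
  else 1 / 2

/-- Expected utility of player `i` from the pure bids `xi` (own) and `xo` (opponent):
he pays his bid in any case and receives `v i` with his winning probability. -/
def payoff (B v : Fin 2 → ℝ) (i : Fin 2) (xi xo : ℝ) : ℝ :=
  winProb B v i xi xo * v i - xi

/-- A mixed strategy of a player with budget `Bi`: a probability measure on `[0, Bi]`. -/
def IsStrategy (Bi : ℝ) (μ : Measure ℝ) : Prop :=
  IsProbabilityMeasure μ ∧ μ (Icc 0 Bi) = 1

/-- Expected utility of player `i` when he plays `μ` and the opponent plays `ν`. -/
def expUtil (B v : Fin 2 → ℝ) (i : Fin 2) (μ ν : Measure ℝ) : ℝ :=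
  ∫ xi, (∫ xo, payoff B v i xi xo ∂ν) ∂μ

/-- `(F 0, F 1)` is a (mixed) Nash equilibrium of the single-item all-pay auction. -/
def IsNash (B v : Fin 2 → ℝ) (F : Fin 2 → Measure ℝ) : Prop :=
  (∀ i, IsStrategy (B i) (F i)) ∧
  ∀ i, ∀ μ, IsStrategy (B i) μ →
    expUtil B v i μ (F (1 - i)) ≤ expUtil B v i (F i) (F (1 - i))

/-- The (topological) support of a mixed strategy. -/
def supp (μ : Measure ℝ) : Set ℝ := {x | ∀ U ∈ nhds x, μ U ≠ 0}

section Helpers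
variable (B v : Fin 2 → ℝ) (i : Fin 2) (xi xo : ℝ)

lemma winProb_nonneg : 0 ≤ winProb B v i xi xo := by
  unfold winProb; split_ifs <;> norm_num

lemma winProb_le_one : winProb B v i xi xo ≤ 1 := by
  unfold winProb; split_ifs <;> norm_num

lemma winProb_of_lt (h : xo < xi) : winProb B v i xi xo = 1 := by
  unfold winProb; rw [if_pos h]

lemma winProb_of_gt (h : xi < xo) : winProb B v i xi xo = 0 := by
  unfold winProb; rw [if_neg (by linarith), if_pos h]

lemma payoff_of_lt (h : xo < xi) : payoff B v i xi xo = v i - xi := by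
  rw [payoff, winProb_of_lt B v i xi xo h, one_mul]

lemma payoff_of_gt (h : xi < xo) : payoff B v i xi xo = -xi := by
  rw [payoff, winProb_of_gt B v i xi xo h, zero_mul, zero_sub]

lemma winProb_tie_win (h : xi = xo) (hL : xi = Lval B v)
    (hm : min (B (1 - i)) (v (1 - i)) < min (B i) (v i)) : winProb B v i xi xo = 1 := by
  unfold winProb
  rw [if_neg (by rw [h]; exact lt_irrefl _), if_neg (by rw [h]; exact lt_irrefl _),
    if_pos ⟨hL, hm⟩]

lemma winProb_tie_lose (h : xi = xo) (hL : xi = Lval B v)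
    (hm : min (B i) (v i) < min (B (1 - i)) (v (1 - i))) : winProb B v i xi xo = 0 := by
  unfold winProb
  rw [if_neg (by rw [h]; exact lt_irrefl _), if_neg (by rw [h]; exact lt_irrefl _),
    if_neg (fun hc => absurd hm (not_lt.mpr hc.2.le)), if_pos ⟨hL, hm⟩]

lemma payoff_measurable : Measurable (fun xo => payoff B v i xi xo) := by
  unfold payoff winProb
  apply Measurable.sub _ measurable_const
  apply Measurable.mul_const _ (v i)
  exact Measurable.ite measurableSet_Iio measurable_const
    (Measurable.ite measurableSet_Ioi measurable_const measurable_const)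

lemma payoff_abs_le : ‖payoff B v i xi xo‖ ≤ |v i| + |xi| := by
  rw [payoff]
  have h1 := winProb_nonneg B v i xi xo
  have h2 := winProb_le_one B v i xi xo
  rw [Real.norm_eq_abs]
  have : |winProb B v i xi xo * v i| ≤ |v i| := by
    rw [abs_mul]
    calc |winProb B v i xi xo| * |v i| ≤ 1 * |v i| := by
          apply mul_le_mul_of_nonneg_right _ (abs_nonneg _)
          rw [abs_of_nonneg h1]; exact h2
      _ = |v i| := one_mul _
  calc |winProb B v i xi xo * v i - xi| ≤ |winProb B v i xi xo * v i| + |xi| := abs_sub _ _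
    _ ≤ |v i| + |xi| := by linarith

lemma payoff_integrable (μ : Measure ℝ) [IsFiniteMeasure μ] :
    Integrable (fun xo => payoff B v i xi xo) μ := by
  refine Integrable.mono' (integrable_const (|v i| + |xi|))
    (payoff_measurable B v i xi).aestronglyMeasurable ?_
  filter_upwards with xo using payoff_abs_le B v i xi xo

instance vol_Ioc_finite (a b : ℝ) : IsFiniteMeasure ((volume : Measure ℝ).restrict (Ioc a b)) :=
  ⟨by rw [Measure.restrict_apply_univ]; exact measure_Ioc_lt_top⟩

instance vol_Ico_finite (a b : ℝ) : IsFiniteMeasure ((volume : Measure ℝ).restrict (Ico a b)) :=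
  ⟨by rw [Measure.restrict_apply_univ]; exact measure_Ico_lt_top⟩

lemma setInt_payoff_Ioc (a b c : ℝ) (hab : a ≤ b)
    (h : ∀ x ∈ Ioo a b, payoff B v i xi x = c) :
    ∫ x in Ioc a b, payoff B v i xi x = (b - a) * c := by
  rw [← Measure.restrict_congr_set Ioo_ae_eq_Ioc,
    setIntegral_congr_fun measurableSet_Ioo h, setIntegral_const, measureReal_def, Real.volume_Ioo,
    ENNReal.toReal_ofReal (by linarith), smul_eq_mul]

lemma setInt_payoff_Ico (a b c : ℝ) (hab : a ≤ b)
    (h : ∀ x ∈ Ioo a b, payoff B v i xi x = c) :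
    ∫ x in Ico a b, payoff B v i xi x = (b - a) * c := by
  rw [← Measure.restrict_congr_set Ioo_ae_eq_Ico,
    setIntegral_congr_fun measurableSet_Ioo h, setIntegral_const, measureReal_def, Real.volume_Ioo,
    ENNReal.toReal_ofReal (by linarith), smul_eq_mul]

lemma integral_payoff_add_smul (μ ν : Measure ℝ) [IsFiniteMeasure μ] [IsFiniteMeasure ν]
    (c d : ℝ) (hc : 0 ≤ c) (hd : 0 ≤ d) :
    ∫ xo, payoff B v i xi xo ∂(ENNReal.ofReal c • μ + ENNReal.ofReal d • ν)
      = c * (∫ xo, payoff B v i xi xo ∂μ) + d * ∫ xo, payoff B v i xi xo ∂ν := by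
  rw [integral_add_measure ((payoff_integrable B v i xi μ).smul_measure ENNReal.ofReal_ne_top)
      ((payoff_integrable B v i xi ν).smul_measure ENNReal.ofReal_ne_top),
    integral_smul_measure, integral_smul_measure, ENNReal.toReal_ofReal hc,
    ENNReal.toReal_ofReal hd, smul_eq_mul, smul_eq_mul]

end Helpers

/-- With asymmetric budgets and `v_s > L` (where `s` has the larger budget and
`w = 1 - s`), the profile in which player `s` has cdf `x/v_w` on `[0, L)` with an
atom of mass `1 - L/v_w` at `L`, and player `w` has an atom of mass `(v_s - L)/v_s`
at `0` and cdf `(v_s - L + x)/v_s` on `(0, L]`, is a Nash equilibrium. -/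
theorem nash_single_item_case1 (B v : Fin 2 → ℝ) (hB : ∀ i, 0 ≤ B i)
    (hv : ∀ i, 0 < v i) (s : Fin 2) (hs : B (1 - s) < B s)
    (hvs : Lval B v < v s) :
    IsNash B v (fun k =>
      if k = s then
        ENNReal.ofReal (1 / v (1 - s)) • volume.restrict (Ico (0 : ℝ) (Lval B v)) +
          ENNReal.ofReal (1 - Lval B v / v (1 - s)) • Measure.dirac (Lval B v)
      else
        ENNReal.ofReal ((v s - Lval B v) / v s) • Measure.dirac (0 : ℝ) +
          ENNReal.ofReal (1 / v s) • volume.restrict (Ioc (0 : ℝ) (Lval B v))) := by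
  set L := Lval B v with hLdef
  have hvs0 : (0:ℝ) < v s := hv s
  have hvw0 : (0:ℝ) < v (1 - s) := hv (1 - s)
  have hvsne : v s ≠ 0 := ne_of_gt hvs0
  have hvwne : v (1 - s) ≠ 0 := ne_of_gt hvw0
  have hL0 : 0 ≤ L := le_min (le_min (hB 0) (hB 1)) (le_min (hv 0).le (hv 1).le)
  have hLB : ∀ j : Fin 2, L ≤ B j := by
    intro j; fin_cases j
    · exact le_trans (min_le_left _ _) (min_le_left _ _)
    · exact le_trans (min_le_left _ _) (min_le_right _ _)
  have hLv : ∀ j : Fin 2, L ≤ v j := by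
    intro j; fin_cases j
    · exact le_trans (min_le_right _ _) (min_le_left _ _)
    · exact le_trans (min_le_right _ _) (min_le_right _ _)
  have hLBs : L < B s := lt_of_le_of_lt (hLB (1 - s)) hs
  have hLBw : L ≤ B (1 - s) := hLB (1 - s)
  have hLvw : L ≤ v (1 - s) := hLv (1 - s)
  have hswap : ∀ f : Fin 2 → ℝ, min (f 0) (f 1) = min (f s) (f (1 - s)) := by
    fin_cases s <;> intro f <;> simp [min_comm]
  have hLalt : L = min (B (1 - s)) (min (v s) (v (1 - s))) := by
    rw [hLdef, Lval, hswap B, hswap v, min_eq_right hs.le]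
  have hminw : min (B (1 - s)) (v (1 - s)) = L := by
    rcases le_total (v s) (v (1 - s)) with h | h
    · have hLm : L = min (B (1 - s)) (v s) := by rw [hLalt, min_eq_left h]
      have hBL : B (1 - s) = L := by
        rcases min_cases (B (1 - s)) (v s) with ⟨he, _⟩ | ⟨he, _⟩
        · rw [hLm, he]
        · exfalso; rw [hLm, he] at hvs; exact lt_irrefl _ hvs
      rw [hBL]; exact min_eq_left (hBL ▸ hLvw)
    · rw [hLalt, min_eq_right h]
  have hmins : L < min (B s) (v s) := lt_min hLBs hvs
  have hne : (1 : Fin 2) - s ≠ s := by fin_cases s <;> decide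
  have hss : (1 : Fin 2) - (1 - s) = s := by fin_cases s <;> decide
  set Fs : Measure ℝ := ENNReal.ofReal (1 / v (1 - s)) • volume.restrict (Ico (0 : ℝ) L) +
      ENNReal.ofReal (1 - L / v (1 - s)) • Measure.dirac L with hFsdef
  set Fw : Measure ℝ := ENNReal.ofReal ((v s - L) / v s) • Measure.dirac (0 : ℝ) +
      ENNReal.ofReal (1 / v s) • volume.restrict (Ioc (0 : ℝ) L) with hFwdef
  have hdivle : L / v (1 - s) ≤ 1 := (div_le_one hvw0).mpr hLvw
  have hvsL : (0:ℝ) < v s - L := by linarith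
  -- applying Fs and Fw to sets
  have hFs_apply : ∀ S : Set ℝ, MeasurableSet S → Ico 0 L ⊆ S → L ∈ S → Fs S = 1 := by
    intro S hS h1 h2
    rw [hFsdef]
    simp only [Measure.add_apply, Measure.smul_apply, smul_eq_mul,
      Measure.restrict_apply hS, inter_eq_self_of_subset_right h1,
      Measure.dirac_apply_of_mem h2, Real.volume_Ico, sub_zero, mul_one]
    rw [← ENNReal.ofReal_mul (by positivity),
      ← ENNReal.ofReal_add (by positivity) (by linarith)]
    have : 1 / v (1 - s) * L + (1 - L / v (1 - s)) = 1 := by field_simp; ring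
    rw [this, ENNReal.ofReal_one]
  have hFw_apply : ∀ S : Set ℝ, MeasurableSet S → (0:ℝ) ∈ S → Ioc 0 L ⊆ S → Fw S = 1 := by
    intro S hS h1 h2
    rw [hFwdef]
    simp only [Measure.add_apply, Measure.smul_apply, smul_eq_mul,
      Measure.restrict_apply hS, inter_eq_self_of_subset_right h2,
      Measure.dirac_apply_of_mem h1, Real.volume_Ioc, sub_zero, mul_one]
    rw [← ENNReal.ofReal_mul (by positivity),
      ← ENNReal.ofReal_add (div_nonneg hvsL.le hvs0.le) (by positivity)]
    have : (v s - L) / v s + 1 / v s * L = 1 := by field_simp; ring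
    rw [this, ENNReal.ofReal_one]
  have hFs_null : ∀ S : Set ℝ, MeasurableSet S → (S ∩ Ico 0 L ⊆ {0}) → L ∉ S → Fs S = 0 := by
    intro S hS h1 h2
    rw [hFsdef]
    simp only [Measure.add_apply, Measure.smul_apply, smul_eq_mul,
      Measure.restrict_apply hS]
    rw [measure_mono_null h1 (measure_singleton _), Measure.dirac_apply,
      indicator_of_notMem h2]
    simp
  have hFw_null : ∀ S : Set ℝ, MeasurableSet S → (0:ℝ) ∉ S → (S ∩ Ioc 0 L ⊆ ∅) → Fw S = 0 := by
    intro S hS h1 h2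
    rw [hFwdef]
    simp only [Measure.add_apply, Measure.smul_apply, smul_eq_mul,
      Measure.restrict_apply hS]
    rw [measure_mono_null h2 measure_empty, Measure.dirac_apply,
      indicator_of_notMem h1]
    simp
  have hFs_univ : Fs univ = 1 := hFs_apply univ MeasurableSet.univ (subset_univ _) (mem_univ _)
  have hFw_univ : Fw univ = 1 := hFw_apply univ MeasurableSet.univ (mem_univ _) (subset_univ _)
  have hFs_prob : IsProbabilityMeasure Fs := ⟨hFs_univ⟩
  have hFw_prob : IsProbabilityMeasure Fw := ⟨hFw_univ⟩
  have hFs_strat : IsStrategy (B s) Fs :=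
    ⟨hFs_prob, hFs_apply _ measurableSet_Icc
      (fun x hx => ⟨hx.1, le_trans hx.2.le hLBs.le⟩) ⟨hL0, hLBs.le⟩⟩
  have hFw_strat : IsStrategy (B (1 - s)) Fw :=
    ⟨hFw_prob, hFw_apply _ measurableSet_Icc ⟨le_refl 0, hB _⟩
      (fun x hx => ⟨hx.1.le, le_trans hx.2 hLBw⟩)⟩
  -- inner integral of player s against Fw
  have hgs_eval : ∀ x : ℝ, (∫ xo, payoff B v s x xo ∂Fw)
      = ((v s - L) / v s) * payoff B v s x 0
        + (1 / v s) * ∫ xo in Ioc (0:ℝ) L, payoff B v s x xo := by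
    intro x
    rw [hFwdef, integral_payoff_add_smul B v s x (Measure.dirac 0)
        (volume.restrict (Ioc (0:ℝ) L)) _ _ (div_nonneg hvsL.le hvs0.le) (by positivity),
      integral_dirac]
  have hgs_eq1 : ∀ x : ℝ, 0 < x → x ≤ L → (∫ xo, payoff B v s x xo ∂Fw) = v s - L := by
    intro x hx0 hxL
    rw [hgs_eval, payoff_of_lt B v s x 0 hx0]
    have hsplit : ∫ xo in Ioc (0:ℝ) L, payoff B v s x xo
        = (x - 0) * (v s - x) + (L - x) * (-x) := by
      rw [← Ioc_union_Ioc_eq_Ioc hx0.le hxL,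
        setIntegral_union (Ioc_disjoint_Ioc_of_le le_rfl) measurableSet_Ioc
          (payoff_integrable B v s x _) (payoff_integrable B v s x _),
        setInt_payoff_Ioc B v s x 0 x (v s - x) hx0.le
          (fun y hy => payoff_of_lt B v s x y hy.2),
        setInt_payoff_Ioc B v s x x L (-x) hxL
          (fun y hy => payoff_of_gt B v s x y hy.1)]
    rw [hsplit]
    field_simp
    ring
  have hgs_eqL : (∫ xo, payoff B v s L xo ∂Fw) = v s - L := by
    by_cases hLpos : 0 < L
    · exact hgs_eq1 L hLpos le_rfl
    · have hLz : L = 0 := le_antisymm (not_lt.mp hLpos) hL0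
      rw [hgs_eval]
      have hpay : payoff B v s L 0 = v s := by
        rw [payoff, winProb_tie_win B v s L 0 hLz (hLdef.symm)
          (by rw [hminw]; exact hmins), one_mul, hLz, sub_zero]
      have hint0 : ∫ xo in Ioc (0:ℝ) L, payoff B v s L xo = (L - 0) * 0 := by
        apply setInt_payoff_Ioc B v s L 0 L 0 hL0
        intro y hy
        exfalso; rw [hLz] at hy; exact absurd hy.2 (not_lt.mpr hy.1.le)
      rw [hpay, hint0]
      field_simp; ring
  have hgs_le : ∀ x ∈ Icc (0:ℝ) (B s), (∫ xo, payoff B v s x xo ∂Fw) ≤ v s - L := by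
    rintro x ⟨hx0, hxB⟩
    by_cases hxz : x = 0
    · subst hxz
      by_cases hLz : L = 0
      · rw [← hLz]; exact le_of_eq hgs_eqL
      · have hLpos : 0 < L := lt_of_le_of_ne hL0 (Ne.symm hLz)
        rw [hgs_eval]
        have hint0 : ∫ xo in Ioc (0:ℝ) L, payoff B v s 0 xo = (L - 0) * 0 := by
          apply setInt_payoff_Ioc B v s 0 0 L 0 hL0
          intro y hy
          rw [payoff_of_gt B v s 0 y hy.1, neg_zero]
        rw [hint0]
        have h1 := winProb_le_one B v s 0 0
        have h2 := winProb_nonneg B v s 0 0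
        have heq : ((v s - L) / v s) * payoff B v s 0 0 + (1 / v s) * ((L - 0) * 0)
            = (v s - L) * winProb B v s 0 0 := by
          rw [payoff]; field_simp; ring
        rw [heq]
        calc (v s - L) * winProb B v s 0 0 ≤ (v s - L) * 1 :=
              mul_le_mul_of_nonneg_left h1 hvsL.le
          _ = v s - L := mul_one _
    · have hx0' : 0 < x := lt_of_le_of_ne hx0 (Ne.symm hxz)
      by_cases hxL : x ≤ L
      · exact le_of_eq (hgs_eq1 x hx0' hxL)
      · push_neg at hxL
        rw [hgs_eval, payoff_of_lt B v s x 0 hx0']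
        have hint : ∫ xo in Ioc (0:ℝ) L, payoff B v s x xo = (L - 0) * (v s - x) :=
          setInt_payoff_Ioc B v s x 0 L (v s - x) hL0
            (fun y hy => payoff_of_lt B v s x y (lt_trans hy.2 hxL))
        rw [hint]
        have heq : ((v s - L) / v s) * (v s - x) + (1 / v s) * ((L - 0) * (v s - x))
            = v s - x := by field_simp; ring
        rw [heq]; linarith
  -- inner integral of player w = 1 - s against Fs
  have hgw_eval : ∀ x : ℝ, (∫ xo, payoff B v (1 - s) x xo ∂Fs)
      = (1 / v (1 - s)) * (∫ xo in Ico (0:ℝ) L, payoff B v (1 - s) x xo)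
        + (1 - L / v (1 - s)) * payoff B v (1 - s) x L := by
    intro x
    rw [hFsdef, integral_payoff_add_smul B v (1 - s) x (volume.restrict (Ico (0:ℝ) L))
        (Measure.dirac L) _ _ (by positivity) (by linarith), integral_dirac]
  have hpayL : ∀ x : ℝ, x ≤ L → payoff B v (1 - s) x L = -x := by
    intro x hxL
    rcases lt_or_eq_of_le hxL with h | h
    · exact payoff_of_gt B v (1 - s) x L h
    · rw [payoff, winProb_tie_lose B v (1 - s) x L h (by rw [h, hLdef])
        (by rw [hss, hminw]; exact hmins), zero_mul, zero_sub]
  have hgw_eq : ∀ x ∈ Icc (0:ℝ) L, (∫ xo, payoff B v (1 - s) x xo ∂Fs) = 0 := by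
    rintro x ⟨hx0, hxL⟩
    rw [hgw_eval, hpayL x hxL]
    have hsplit : ∫ xo in Ico (0:ℝ) L, payoff B v (1 - s) x xo
        = (x - 0) * (v (1 - s) - x) + (L - x) * (-x) := by
      rw [← Ico_union_Ico_eq_Ico hx0 hxL,
        setIntegral_union Ico_disjoint_Ico_same measurableSet_Ico
          (payoff_integrable B v (1 - s) x _) (payoff_integrable B v (1 - s) x _),
        setInt_payoff_Ico B v (1 - s) x 0 x (v (1 - s) - x) hx0
          (fun y hy => payoff_of_lt B v (1 - s) x y hy.2),
        setInt_payoff_Ico B v (1 - s) x x L (-x) hxL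
          (fun y hy => payoff_of_gt B v (1 - s) x y hy.1)]
    rw [hsplit]
    field_simp
    ring
  have hgw_le : ∀ x ∈ Icc (0:ℝ) (B (1 - s)), (∫ xo, payoff B v (1 - s) x xo ∂Fs) ≤ 0 := by
    rintro x ⟨hx0, hxB⟩
    by_cases hxL : x ≤ L
    · exact le_of_eq (hgw_eq x ⟨hx0, hxL⟩)
    · push_neg at hxL
      have hLvw' : L = v (1 - s) := by
        rcases min_cases (B (1 - s)) (v (1 - s)) with ⟨he, _⟩ | ⟨he, _⟩
        · exfalso
          have : B (1 - s) = L := by rw [← hminw, he]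
          linarith
        · rw [← hminw, he]
      rw [hgw_eval, payoff_of_lt B v (1 - s) x L hxL]
      have hint : ∫ xo in Ico (0:ℝ) L, payoff B v (1 - s) x xo
          = (L - 0) * (v (1 - s) - x) :=
        setInt_payoff_Ico B v (1 - s) x 0 L (v (1 - s) - x) hL0
          (fun y hy => payoff_of_lt B v (1 - s) x y (lt_trans hy.2 hxL))
      rw [hint]
      have heq : (1 / v (1 - s)) * ((L - 0) * (v (1 - s) - x))
          + (1 - L / v (1 - s)) * (v (1 - s) - x) = v (1 - s) - x := by
        field_simp; ring
      rw [heq]; linarith [hLvw' ▸ hxL]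
  -- a.e. facts
  have hnulls : Fs ((Ioc (0:ℝ) L ∪ {L})ᶜ) = 0 := by
    apply hFs_null _ ((measurableSet_Ioc.union (measurableSet_singleton L)).compl)
    · rintro y ⟨hyc, hy0, hyL⟩
      simp only [mem_compl_iff, mem_union, mem_singleton_iff, not_or] at hyc
      have : ¬ (0 < y) := fun h => hyc.1 ⟨h, hyL.le⟩
      simpa using le_antisymm (not_lt.mp this) hy0
    · intro h; exact h (Or.inr rfl)
  have hnullw : Fw ((Icc (0:ℝ) L)ᶜ) = 0 := by
    apply hFw_null _ measurableSet_Icc.compl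
    · intro h; exact h ⟨le_rfl, hL0⟩
    · rintro y ⟨hyc, hy⟩
      exact absurd ⟨hy.1.le, hy.2⟩ hyc
  have hR : ∫ xi, (∫ xo, payoff B v s xi xo ∂Fw) ∂Fs = v s - L := by
    have hae : (fun x => ∫ xo, payoff B v s x xo ∂Fw) =ᵐ[Fs] fun _ => v s - L := by
      rw [Filter.EventuallyEq, ae_iff]
      apply measure_mono_null _ hnulls
      intro x hx
      simp only [mem_setOf_eq] at hx
      intro hmem
      rcases hmem with h | h
      · exact hx (hgs_eq1 x h.1 h.2)
      · rw [mem_singleton_iff] at h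
        subst h
        exact hx hgs_eqL
    rw [integral_congr_ae hae]
    haveI := hFs_prob
    simp [integral_const]
  have hRw : ∫ xi, (∫ xo, payoff B v (1 - s) xi xo ∂Fs) ∂Fw = 0 := by
    have hae : (fun x => ∫ xo, payoff B v (1 - s) x xo ∂Fs) =ᵐ[Fw] fun _ => (0:ℝ) := by
      rw [Filter.EventuallyEq, ae_iff]
      apply measure_mono_null _ hnullw
      intro x hx
      simp only [mem_setOf_eq] at hx
      intro hmem
      exact hx (hgw_eq x hmem)
    rw [integral_congr_ae hae]
    simp
  refine ⟨?_, ?_⟩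
  · intro i
    by_cases hi : i = s
    · subst hi; simpa using hFs_strat
    · have hi' : i = 1 - s := by omega
      subst hi'; simpa [hne] using hFw_strat
  · intro i μ hμ
    by_cases hi : i = s
    · subst hi
      have e1 : (fun k => if k = i then Fs else Fw) (1 - i) = Fw := by simp [hne]
      have e2 : (fun k => if k = i then Fs else Fw) i = Fs := by simp
      rw [e1, e2]
      simp only [expUtil]
      rw [hR]
      by_cases hint : Integrable (fun x => ∫ xo, payoff B v i x xo ∂Fw) μ
      · have hcompl : μ (Icc (0:ℝ) (B i))ᶜ = 0 := by
          haveI := hμ.1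
          rw [measure_compl measurableSet_Icc (measure_ne_top μ _), hμ.2, measure_univ,
            tsub_self]
        have hmem : ∀ᵐ x ∂μ, x ∈ Icc (0:ℝ) (B i) := by
          rw [ae_iff]; exact hcompl
        have haeb : (fun x => ∫ xo, payoff B v i x xo ∂Fw) ≤ᵐ[μ] fun _ => v i - L := by
          filter_upwards [hmem] with x hx using hgs_le x hx
        haveI := hμ.1
        calc ∫ x, (∫ xo, payoff B v i x xo ∂Fw) ∂μ
            ≤ ∫ _, (v i - L) ∂μ := integral_mono_ae hint (integrable_const _) haeb
          _ = v i - L := by haveI := hμ.1; simp [integral_const]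
      · rw [integral_undef hint]; linarith
    · have hi' : i = 1 - s := by omega
      subst hi'
      have e3 : (fun k => if k = s then Fs else Fw) (1 - (1 - s)) = Fs := by
        rw [hss]; simp
      have e4 : (fun k => if k = s then Fs else Fw) (1 - s) = Fw := by simp [hne]
      rw [e3, e4]
      simp only [expUtil]
      rw [hRw]
      by_cases hint : Integrable (fun x => ∫ xo, payoff B v (1 - s) x xo ∂Fs) μ
      · have hcompl : μ (Icc (0:ℝ) (B (1 - s)))ᶜ = 0 := by
          haveI := hμ.1
          rw [measure_compl measurableSet_Icc (measure_ne_top μ _), hμ.2, measure_univ,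
            tsub_self]
        have hmem : ∀ᵐ x ∂μ, x ∈ Icc (0:ℝ) (B (1 - s)) := by
          rw [ae_iff]; exact hcompl
        have haeb : (fun x => ∫ xo, payoff B v (1 - s) x xo ∂Fs) ≤ᵐ[μ] fun _ => (0:ℝ) := by
          filter_upwards [hmem] with x hx using hgw_le x hx
        haveI := hμ.1
        calc ∫ x, (∫ xo, payoff B v (1 - s) x xo ∂Fs) ∂μ
            ≤ ∫ _, (0:ℝ) ∂μ := integral_mono_ae hint (integrable_const _) haeb
          _ = 0 := integral_zero _ _
      · rw [integral_undef hint]
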